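/- Let g : X ⥤ A be a functor between categories which is bijective on objects, and let h : X ⥤ B be a discrete opfibration. Define φ₀ on objects of A by φ₀(a) = h.obj((g.obj)⁻¹(a)), and for an object a of A and a morphism u : φ₀(a) ⟶ b of B define φ(a,u) := g.map of the unique h-lift of u at (g.obj)⁻¹(a), with p(a,u) := g.obj of the codomain of that lift. Then the data (φ₀, p, φ) is a cofunctor B ⇸ A. -/

import Mathlib

open CategoryTheory

/-- A functor is a discrete opfibration if every morphism out of the image of an object
has a unique lift. -/
def IsDiscreteOpfibration {X B : Type*} [Category X] [Category B] (h : X ⥤ B) : Prop :=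
  ∀ (x : X) (b : B) (u : h.obj x ⟶ b),
    ∃! w : Σ x' : X, (x ⟶ x'), ∃ e : h.obj w.1 = b, h.map w.2 ≫ eqToHom e = u

/-- A cofunctor `φ : B ⇸ A` between categories. -/
structure Cofunctor (B A : Type*) [Category B] [Category A] where
  obj : A → B
  p : ∀ (a : A) (b : B), (obj a ⟶ b) → A
  lift : ∀ (a : A) (b : B) (u : obj a ⟶ b), a ⟶ p a b u
  obj_p : ∀ (a : A) (b : B) (u : obj a ⟶ b), obj (p a b u) = b
  p_id : ∀ a : A, p a (obj a) (𝟙 (obj a)) = a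
  lift_id : ∀ a : A, lift a (obj a) (𝟙 (obj a)) ≫ eqToHom (p_id a) = 𝟙 a
  p_comp : ∀ (a : A) (b b' : B) (u : obj a ⟶ b) (v : b ⟶ b'),
    p a b' (u ≫ v) = p (p a b u) b' (eqToHom (obj_p a b u) ≫ v)
  lift_comp : ∀ (a : A) (b b' : B) (u : obj a ⟶ b) (v : b ⟶ b'),
    lift a b' (u ≫ v) ≫ eqToHom (p_comp a b b' u v) =
      lift a b u ≫ lift (p a b u) b' (eqToHom (obj_p a b u) ≫ v)

variable {X A B : Type*} [Category X] [Category A] [Category B]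

/-- The inverse of the object bijection of `g`. -/
noncomputable def gInv (g : X ⥤ A) (hg : Function.Bijective g.obj) : A → X :=
  (Equiv.ofBijective g.obj hg).symm

theorem gInv_spec (g : X ⥤ A) (hg : Function.Bijective g.obj) (a : A) :
    g.obj (gInv g hg a) = a :=
  (Equiv.ofBijective g.obj hg).apply_symm_apply a

/-- The object assignment `φ₀ : A → B` of the induced cofunctor:
`φ₀ a = h.obj ((g.obj)⁻¹ a)`. -/
noncomputable def spanObj (g : X ⥤ A) (h : X ⥤ B) (hg : Function.Bijective g.obj) :
    A → B :=
  fun a => h.obj (gInv g hg a)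

/-- The unique `h`-lift of `u` at `(g.obj)⁻¹ a`. -/
noncomputable def spanChosen (g : X ⥤ A) (h : X ⥤ B) (hg : Function.Bijective g.obj)
    (hh : IsDiscreteOpfibration h) (a : A) (b : B) (u : spanObj g h hg a ⟶ b) :
    Σ x' : X, (gInv g hg a ⟶ x') :=
  Classical.choose (hh (gInv g hg a) b u)

/-- The codomain assignment `p(a, u)` of the induced cofunctor. -/
noncomputable def spanP (g : X ⥤ A) (h : X ⥤ B) (hg : Function.Bijective g.obj)
    (hh : IsDiscreteOpfibration h) (a : A) (b : B) (u : spanObj g h hg a ⟶ b) : A :=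
  g.obj (spanChosen g h hg hh a b u).1

/-- The lift assignment `φ(a, u)` of the induced cofunctor. -/
noncomputable def spanLift (g : X ⥤ A) (h : X ⥤ B) (hg : Function.Bijective g.obj)
    (hh : IsDiscreteOpfibration h) (a : A) (b : B) (u : spanObj g h hg a ⟶ b) :
    a ⟶ spanP g h hg hh a b u :=
  eqToHom (gInv_spec g hg a).symm ≫ g.map (spanChosen g h hg hh a b u).2

section Aux

variable (g : X ⥤ A) (h : X ⥤ B) (hg : Function.Bijective g.obj)
  (hh : IsDiscreteOpfibration h)

theorem gInv_obj (x : X) : gInv g hg (g.obj x) = x :=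
  (Equiv.ofBijective g.obj hg).symm_apply_apply x

theorem spanChosen_spec (a : A) (b : B) (u : spanObj g h hg a ⟶ b) :
    ∃ e : h.obj (spanChosen g h hg hh a b u).1 = b,
      h.map (spanChosen g h hg hh a b u).2 ≫ eqToHom e = u :=
  (Classical.choose_spec (hh (gInv g hg a) b u)).1

theorem spanChosen_unique (a : A) (b : B) (u : spanObj g h hg a ⟶ b)
    (y : Σ x' : X, (gInv g hg a ⟶ x'))
    (hy : ∃ e : h.obj y.1 = b, h.map y.2 ≫ eqToHom e = u) :
    spanChosen g h hg hh a b u = y :=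
  ((Classical.choose_spec (hh (gInv g hg a) b u)).2 y hy).symm

theorem span_obj_p (a : A) (b : B) (u : spanObj g h hg a ⟶ b) :
    spanObj g h hg (spanP g h hg hh a b u) = b := by
  obtain ⟨e, -⟩ := spanChosen_spec g h hg hh a b u
  simpa [spanObj, spanP, gInv_obj] using e

theorem spanChosen_id (a : A) :
    spanChosen g h hg hh a (spanObj g h hg a) (𝟙 _) = ⟨gInv g hg a, 𝟙 _⟩ :=
  spanChosen_unique g h hg hh _ _ _ _ ⟨rfl, by simp [spanObj]⟩

theorem span_p_id (a : A) : spanP g h hg hh a (spanObj g h hg a) (𝟙 _) = a := by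
  rw [spanP, spanChosen_id]; exact gInv_spec g hg a

theorem spanChosen_comp (a : A) (b b' : B) (u : spanObj g h hg a ⟶ b) (v : b ⟶ b')
    (e : spanObj g h hg (spanP g h hg hh a b u) = b) :
    spanChosen g h hg hh a b' (u ≫ v) =
      ⟨(spanChosen g h hg hh (spanP g h hg hh a b u) b' (eqToHom e ≫ v)).1,
        (spanChosen g h hg hh a b u).2 ≫
          eqToHom (gInv_obj g hg _).symm ≫
          (spanChosen g h hg hh (spanP g h hg hh a b u) b' (eqToHom e ≫ v)).2⟩ := by
  apply spanChosen_unique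
  obtain ⟨e1, he1⟩ := spanChosen_spec g h hg hh a b u
  obtain ⟨e2, he2⟩ := spanChosen_spec g h hg hh (spanP g h hg hh a b u) b' (eqToHom e ≫ v)
  refine ⟨e2, ?_⟩
  dsimp only
  conv_rhs => rw [← he1]
  simp only [Functor.map_comp, eqToHom_map, Category.assoc, he2]
  erw [Functor.map_comp, eqToHom_map, Category.assoc, he2, eqToHom_trans_assoc]
  exact (Category.assoc _ _ _).symm

theorem span_p_comp (a : A) (b b' : B) (u : spanObj g h hg a ⟶ b) (v : b ⟶ b')
    (e : spanObj g h hg (spanP g h hg hh a b u) = b) :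
    spanP g h hg hh a b' (u ≫ v) =
      spanP g h hg hh (spanP g h hg hh a b u) b' (eqToHom e ≫ v) := by
  rw [spanP, spanChosen_comp g h hg hh a b b' u v e]; rfl

end Aux

theorem map_snd_eq (g : X ⥤ A) {x : X} {s t : Σ x' : X, (x ⟶ x')} (hst : s = t)
    (e : g.obj s.1 = g.obj t.1) : g.map s.2 ≫ eqToHom e = g.map t.2 := by
  subst hst; simp

theorem map_snd_eqToHom (g : X ⥤ A) {x : X} {s t : Σ x' : X, (x ⟶ x')} (hst : s = t)
    {a : A} (e : g.obj s.1 = a) (e' : g.obj t.1 = a) :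
    g.map s.2 ≫ eqToHom e = g.map t.2 ≫ eqToHom e' := by
  subst hst; rfl

/-- Given a functor `g : X ⥤ A` which is bijective on objects and a discrete opfibration
`h : X ⥤ B`, the data `(φ₀, p, φ)` defined from the unique `h`-lifts is a cofunctor
`B ⇸ A`. -/
theorem span_cofunctor (g : X ⥤ A) (h : X ⥤ B) (hg : Function.Bijective g.obj)
    (hh : IsDiscreteOpfibration h) :
    ∃ ψ : Cofunctor B A,
      ψ.obj = spanObj g h hg ∧
      HEq ψ.p (spanP g h hg hh) ∧
      HEq ψ.lift (spanLift g h hg hh) := by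
  refine ⟨⟨spanObj g h hg, spanP g h hg hh, spanLift g h hg hh,
      span_obj_p g h hg hh, span_p_id g h hg hh, ?_,
      fun a b b' u v => span_p_comp g h hg hh a b b' u v _,
      ?_⟩, rfl, HEq.rfl, HEq.rfl⟩
  · intro a
    simp only [spanLift, Category.assoc]
    refine (Category.assoc _ _ _).trans ?_
    refine (congrArg (eqToHom (gInv_spec g hg a).symm ≫ ·) (map_snd_eqToHom g
      (spanChosen_id g h hg hh a) (span_p_id g h hg hh a) (gInv_spec g hg a))).trans ?_
    simp
  · intro a b b' u v
    have key := map_snd_eq g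
      (spanChosen_comp g h hg hh a b b' u v (span_obj_p g h hg hh a b u))
      (span_p_comp g h hg hh a b b' u v (span_obj_p g h hg hh a b u))
    simp only [spanLift, Category.assoc, key]
    refine (Category.assoc _ _ _).trans ?_
    refine (congrArg (eqToHom (gInv_spec g hg a).symm ≫ ·) key).trans ?_
    erw [Functor.map_comp, Functor.map_comp, eqToHom_map, Category.assoc]
    rfl
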